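/- Let τ ∈ ℂ and let U = { t ∈ ℂ : 1 − τt ∉ (−∞, 0] }. Define f : U × ℂ → ℂ by f(t,w) = (1 − τt)^{−1/2} e^{(t/(1−τt)) w²}, using the principal square root. Then f(0,w) = 1 for all w, and f satisfies the evolution equation ∂_t f(t,w) = (τ²/4) ∂_w² f(t,w) + τ w ∂_w f(t,w) + (w² + τ/2) f(t,w) for all (t,w) ∈ U × ℂ. Hence f(t,·) is the real-analytic solution giving the τ-expression :e_*^{t w_*²}:_τ of the *-exponential of w_*². -/

import Mathlib

open Complex

/-- `f(t,w) = (1 − τt)^{−1/2} e^{(t/(1−τt)) w²}` (principal square root), the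
`τ`-expression `:e_*^{t w_*²}:_τ` of the `*`-exponential of `w_*²`. -/
noncomputable def starExpQuad (τ t w : ℂ) : ℂ :=
  (1 - τ * t) ^ (-(1 / 2) : ℂ) * Complex.exp (t / (1 - τ * t) * w ^ 2)

/-- For every `τ ∈ ℂ`: `f(0,w) = 1`, and on
`U = {t : 1 − τt ∉ (−∞,0]}` the function `f` solves the evolution equation
`∂_t f = (τ²/4) ∂_w² f + τ w ∂_w f + (w² + τ/2) f`, i.e. `d/dt f_t = :w_*²:_τ *_τ f_t`
with `f_0 = 1`. -/
theorem starExpQuad_evolution (τ : ℂ) :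
    (∀ w : ℂ, starExpQuad τ 0 w = 1) ∧
    (∀ t w : ℂ, (1 - τ * t) ∉ {z : ℂ | z.re ≤ 0 ∧ z.im = 0} →
      deriv (fun t' : ℂ => starExpQuad τ t' w) t =
        τ ^ 2 / 4 * deriv (deriv (fun w' : ℂ => starExpQuad τ t w')) w +
          τ * w * deriv (fun w' : ℂ => starExpQuad τ t w') w +
          (w ^ 2 + τ / 2) * starExpQuad τ t w) := by
  constructor
  · intro w
    simp [starExpQuad]
  · intro t w h
    set a : ℂ := 1 - τ * t with ha_def
    have ha : a ∈ Complex.slitPlane := by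
      rcases lt_or_ge 0 a.re with h1 | h1
      · exact Or.inl h1
      · exact Or.inr fun him => h ⟨h1, him⟩
    have ha0 : a ≠ 0 := Complex.slitPlane_ne_zero ha
    set b : ℂ := t / a with hb_def
    set P : ℂ := a ^ (-(1 / 2) : ℂ) with hP_def
    -- first w-derivative
    have hw1 : ∀ w' : ℂ, HasDerivAt (fun w' : ℂ => starExpQuad τ t w')
        (P * (Complex.exp (b * w' ^ 2) * (b * (2 * w')))) w' := by
      intro w'
      have h1 : HasDerivAt (fun w' : ℂ => b * w' ^ 2) (b * (2 * w')) w' := by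
        simpa using (hasDerivAt_pow 2 w').const_mul b
      have hfun : (fun w' : ℂ => starExpQuad τ t w')
          = fun y : ℂ => P * Complex.exp (b * y ^ 2) := by
        funext y
        simp only [starExpQuad, ← ha_def, ← hb_def, ← hP_def]
      rw [hfun]
      exact h1.cexp.const_mul P
    have hderiv1 : deriv (fun w' : ℂ => starExpQuad τ t w')
        = fun w' : ℂ => P * (Complex.exp (b * w' ^ 2) * (b * (2 * w'))) :=
      funext fun w' => (hw1 w').deriv
    -- second w-derivative
    have hw2 : HasDerivAt (fun w' : ℂ => P * (Complex.exp (b * w' ^ 2) * (b * (2 * w'))))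
        (P * (Complex.exp (b * w ^ 2) * (b * (2 * w)) * (b * (2 * w))
          + Complex.exp (b * w ^ 2) * (b * 2))) w := by
      have h1 : HasDerivAt (fun w' : ℂ => b * w' ^ 2) (b * (2 * w)) w := by
        simpa using (hasDerivAt_pow 2 w).const_mul b
      have h2 : HasDerivAt (fun w' : ℂ => Complex.exp (b * w' ^ 2)) 
          (Complex.exp (b * w ^ 2) * (b * (2 * w))) w := h1.cexp
      have h3 : HasDerivAt (fun w' : ℂ => b * (2 * w')) (b * 2) w := by
        simpa [mul_assoc] using (hasDerivAt_id w).const_mul (b * 2)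
      simpa [mul_comm, mul_assoc, mul_left_comm] using (h2.mul h3).const_mul P
    -- t-derivative
    have hA : HasDerivAt (fun t' : ℂ => 1 - τ * t') (-τ) t := by
      simpa using ((hasDerivAt_id t).const_mul τ).const_sub 1
    have hP : HasDerivAt (fun t' : ℂ => (1 - τ * t') ^ (-(1 / 2) : ℂ))
        ((-(1 / 2) : ℂ) * a ^ ((-(1 / 2) : ℂ) - 1) * (-τ)) t :=
      hA.cpow_const (by simpa [← ha_def] using ha)
    have hq : HasDerivAt (fun t' : ℂ => t' / (1 - τ * t'))
        ((1 * a - t * (-τ)) / a ^ 2) t :=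
      (hasDerivAt_id t).div hA (by simpa [← ha_def] using ha0)
    have hE : HasDerivAt (fun t' : ℂ => Complex.exp (t' / (1 - τ * t') * w ^ 2))
        (Complex.exp (b * w ^ 2) * ((1 * a - t * (-τ)) / a ^ 2 * w ^ 2)) t := by
      simpa [hb_def] using (hq.mul_const (w ^ 2)).cexp
    have ht : HasDerivAt (fun t' : ℂ => starExpQuad τ t' w)
        ((-(1 / 2) : ℂ) * a ^ ((-(1 / 2) : ℂ) - 1) * (-τ) * Complex.exp (b * w ^ 2)
          + P * (Complex.exp (b * w ^ 2) * ((1 * a - t * (-τ)) / a ^ 2 * w ^ 2))) t := by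
      simpa [starExpQuad, hb_def, hP_def, ha_def] using hP.fun_mul hE
    -- rewrite cpow
    have hpow : a ^ ((-(1 / 2) : ℂ) - 1) = P / a := by
      rw [hP_def, Complex.cpow_sub _ _ ha0, Complex.cpow_one]
    rw [ht.deriv, (hw1 w).deriv, hderiv1, hw2.deriv, hpow]
    have ha0' : (1 : ℂ) - τ * t ≠ 0 := by rw [← ha_def]; exact ha0
    simp only [starExpQuad, ← ha_def, ← hb_def, ← hP_def]
    rw [hb_def]
    set E : ℂ := cexp (t / a * w ^ 2) with hE_def
    have hrel : a + τ * t = 1 := by rw [ha_def]; ring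
    have hnum : (1 : ℂ) * a - t * -τ = 1 := by linear_combination hrel
    rw [hnum]
    clear_value a b P E
    have hy : a * a⁻¹ = 1 := mul_inv_cancel₀ ha0
    simp only [div_eq_mul_inv, one_mul, mul_one, ← inv_pow]
    linear_combination (P * E * (τ / 2 + w ^ 2 * ((1 + τ * t) * a⁻¹ + 1))) * hy
      - (P * E * (τ / 2 * a⁻¹ + w ^ 2 * ((1 + τ * t) * a⁻¹ ^ 2 + a⁻¹))) * hrel
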